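/- arXiv:math/0609625 — 3 statements merged into one kernel-verified Lean document; each statement's English description precedes it below -/
import Mathlib

section
/- If F is a distribution function on ℝ with density f such that lim_{x→∞} x·f(x)/(1−F(x)) = α > 0, then 1−F is regularly varying at infinity with index −α; i.e., for every λ > 0, lim_{x→∞} (1−F(λx))/(1−F(x)) = λ^{−α}. -/
open Filter Real

private lemma vm_anti_aux (F f : ℝ → ℝ)
    (hderiv : ∀ x, HasDerivAt F (f x) x)
    (hF_lt_one : ∀ x, F x < 1) (β X : ℝ) (hX : 0 < X)
    (hβ : ∀ t ∈ Set.Ici X, β ≤ t * f t / (1 - F t)) :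
    AntitoneOn (fun t => (1 - F t) * t ^ β) (Set.Ici X) := by
  have hG : ∀ t, 0 < 1 - F t := fun t => by linarith [hF_lt_one t]
  have hd : ∀ t : ℝ, 0 < t → HasDerivAt (fun t => (1 - F t) * t ^ β)
      ((0 - f t) * t ^ β + (1 - F t) * (β * t ^ (β - 1))) t := by
    intro t ht
    exact ((hasDerivAt_const t (1:ℝ)).sub (hderiv t)).mul
      (Real.hasDerivAt_rpow_const (Or.inl ht.ne'))
  apply antitoneOn_of_deriv_nonpos (convex_Ici X)
  · intro t ht
    exact (hd t (lt_of_lt_of_le hX ht)).continuousAt.continuousWithinAt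
  · intro t ht
    rw [interior_Ici] at ht
    exact ((hd t (hX.trans ht)).differentiableAt).differentiableWithinAt
  · intro t ht
    rw [interior_Ici] at ht
    have ht0 : 0 < t := hX.trans ht
    rw [(hd t ht0).deriv]
    have h1 : β * (1 - F t) ≤ t * f t := (le_div_iff₀ (hG t)).mp (hβ t (Set.mem_Ici.mpr (le_of_lt ht)))
    have h2 : (0:ℝ) < t ^ (β - 1) := Real.rpow_pos_of_pos ht0 _
    have h3 : t * t ^ (β - 1) = t ^ β := by
      rw [mul_comm, ← Real.rpow_add_one ht0.ne']; ring_nf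
    have h4 : (1 - F t) * (β * t ^ (β - 1)) ≤ f t * t ^ β := by
      calc (1 - F t) * (β * t ^ (β - 1)) = (β * (1 - F t)) * t ^ (β - 1) := by ring
        _ ≤ (t * f t) * t ^ (β - 1) := mul_le_mul_of_nonneg_right h1 h2.le
        _ = f t * (t * t ^ (β - 1)) := by ring
        _ = f t * t ^ β := by rw [h3]
    linarith

private lemma vm_mono_aux (F f : ℝ → ℝ)
    (hderiv : ∀ x, HasDerivAt F (f x) x)
    (hF_lt_one : ∀ x, F x < 1) (β X : ℝ) (hX : 0 < X)
    (hβ : ∀ t ∈ Set.Ici X, t * f t / (1 - F t) ≤ β) :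
    MonotoneOn (fun t => (1 - F t) * t ^ β) (Set.Ici X) := by
  have hG : ∀ t, 0 < 1 - F t := fun t => by linarith [hF_lt_one t]
  have hd : ∀ t : ℝ, 0 < t → HasDerivAt (fun t => (1 - F t) * t ^ β)
      ((0 - f t) * t ^ β + (1 - F t) * (β * t ^ (β - 1))) t := by
    intro t ht
    exact ((hasDerivAt_const t (1:ℝ)).sub (hderiv t)).mul
      (Real.hasDerivAt_rpow_const (Or.inl ht.ne'))
  apply monotoneOn_of_deriv_nonneg (convex_Ici X)
  · intro t ht
    exact (hd t (lt_of_lt_of_le hX ht)).continuousAt.continuousWithinAt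
  · intro t ht
    rw [interior_Ici] at ht
    exact ((hd t (hX.trans ht)).differentiableAt).differentiableWithinAt
  · intro t ht
    rw [interior_Ici] at ht
    have ht0 : 0 < t := hX.trans ht
    rw [(hd t ht0).deriv]
    have h1 : t * f t ≤ β * (1 - F t) := (div_le_iff₀ (hG t)).mp (hβ t (Set.mem_Ici.mpr (le_of_lt ht)))
    have h2 : (0:ℝ) < t ^ (β - 1) := Real.rpow_pos_of_pos ht0 _
    have h3 : t * t ^ (β - 1) = t ^ β := by
      rw [mul_comm, ← Real.rpow_add_one ht0.ne']; ring_nf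
    have h4 : f t * t ^ β ≤ (1 - F t) * (β * t ^ (β - 1)) := by
      calc f t * t ^ β = f t * (t * t ^ (β - 1)) := by rw [h3]
        _ = (t * f t) * t ^ (β - 1) := by ring
        _ ≤ (β * (1 - F t)) * t ^ (β - 1) := mul_le_mul_of_nonneg_right h1 h2.le
        _ = (1 - F t) * (β * t ^ (β - 1)) := by ring
    linarith

private lemma vm_key (F f : ℝ → ℝ) (α : ℝ) (hα : 0 < α)
    (hderiv : ∀ x, HasDerivAt F (f x) x)
    (hF_lt_one : ∀ x, F x < 1)
    (hvm : Tendsto (fun x => x * f x / (1 - F x)) atTop (nhds α))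
    (l : ℝ) (hl : 1 ≤ l) :
    Tendsto (fun x => (1 - F (l * x)) / (1 - F x)) atTop (nhds (l ^ (-α))) := by
  have hl0 : (0:ℝ) < l := lt_of_lt_of_le one_pos hl
  have hG : ∀ t, 0 < 1 - F t := fun t => by linarith [hF_lt_one t]
  -- the squeeze bounds
  have bounds : ∀ ε : ℝ, 0 < ε → ε < α →
      ∀ᶠ x in atTop, l ^ (-α - ε) ≤ (1 - F (l * x)) / (1 - F x) ∧
        (1 - F (l * x)) / (1 - F x) ≤ l ^ (ε - α) := by
    intro ε hε hεα
    have hev : ∀ᶠ t in atTop, |t * f t / (1 - F t) - α| < ε :=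
      hvm (Metric.ball_mem_nhds α hε)
    rw [eventually_atTop] at hev
    obtain ⟨X₀, hX₀⟩ := hev
    set X := max X₀ 1 with hXdef
    have hX1 : (0:ℝ) < X := lt_of_lt_of_le one_pos (le_max_right _ _)
    have hlow : ∀ t ∈ Set.Ici X, α - ε ≤ t * f t / (1 - F t) := by
      intro t ht
      have := hX₀ t (le_trans (le_max_left _ _) ht)
      rw [abs_lt] at this; linarith [this.1]
    have hhigh : ∀ t ∈ Set.Ici X, t * f t / (1 - F t) ≤ α + ε := by
      intro t ht
      have := hX₀ t (le_trans (le_max_left _ _) ht)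
      rw [abs_lt] at this; linarith [this.2]
    have hanti := vm_anti_aux F f hderiv hF_lt_one (α - ε) X hX1 hlow
    have hmono := vm_mono_aux F f hderiv hF_lt_one (α + ε) X hX1 hhigh
    filter_upwards [eventually_ge_atTop X] with x hx
    have hx0 : 0 < x := hX1.trans_le hx
    have hlx : x ≤ l * x := le_mul_of_one_le_left hx0.le hl
    have hxI : x ∈ Set.Ici X := hx
    have hlxI : l * x ∈ Set.Ici X := le_trans hx hlx
    have hGx := hG x
    have hGlx := hG (l * x)
    constructor
    · -- lower bound from monotone with β = α + ε
      have h := hmono hxI hlxI hlx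
      simp only at h
      rw [Real.mul_rpow hl0.le hx0.le] at h
      have hxp : (0:ℝ) < x ^ (α + ε) := Real.rpow_pos_of_pos hx0 _
      have hlp : (0:ℝ) < l ^ (α + ε) := Real.rpow_pos_of_pos hl0 _
      have h' : (1 - F x) ≤ (1 - F (l * x)) * l ^ (α + ε) := by
        have := (mul_le_mul_iff_left₀ hxp).mp (by linarith [h] :
          (1 - F x) * x ^ (α + ε) ≤ ((1 - F (l * x)) * l ^ (α + ε)) * x ^ (α + ε))
        linarith
      have heq : l ^ (-α - ε) = (l ^ (α + ε))⁻¹ := by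
        rw [← Real.rpow_neg hl0.le]; ring_nf
      rw [heq, le_div_iff₀ hGx, inv_mul_le_iff₀ hlp]
      linarith
    · -- upper bound from antitone with β = α - ε
      have h := hanti hxI hlxI hlx
      simp only at h
      rw [Real.mul_rpow hl0.le hx0.le] at h
      have hxp : (0:ℝ) < x ^ (α - ε) := Real.rpow_pos_of_pos hx0 _
      have hlp : (0:ℝ) < l ^ (α - ε) := Real.rpow_pos_of_pos hl0 _
      have h' : (1 - F (l * x)) * l ^ (α - ε) ≤ (1 - F x) := by
        have := (mul_le_mul_iff_left₀ hxp).mp (by linarith [h] :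
          ((1 - F (l * x)) * l ^ (α - ε)) * x ^ (α - ε) ≤ (1 - F x) * x ^ (α - ε))
        linarith
      have heq : l ^ (ε - α) = (l ^ (α - ε))⁻¹ := by
        rw [← Real.rpow_neg hl0.le]; ring_nf
      rw [div_le_iff₀ hGx, heq, inv_mul_eq_div, le_div_iff₀ hlp]
      linarith
  -- continuity of exponent
  have hc : Continuous fun p : ℝ => l ^ p := by
    have h2 : Continuous fun p : ℝ => Real.exp (Real.log l * p) :=
      Real.continuous_exp.comp (continuous_const.mul continuous_id)
    have : (fun p : ℝ => l ^ p) = fun p : ℝ => Real.exp (Real.log l * p) := by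
      funext p; rw [Real.rpow_def_of_pos hl0]
    rw [this]; exact h2
  rw [tendsto_order]
  constructor
  · intro a ha
    have hc1 : Tendsto (fun ε : ℝ => l ^ (-α - ε)) (nhds 0) (nhds (l ^ (-α))) := by
      have hsub : Continuous fun ε : ℝ => -α - ε := by continuity
      have := (hc.comp hsub).tendsto 0
      simpa [Function.comp_def] using this
    have hev1 : ∀ᶠ ε in nhds (0:ℝ), a < l ^ (-α - ε) := hc1.eventually (eventually_gt_nhds ha)
    have hev2 : ∀ᶠ ε in nhds (0:ℝ), ε < α := eventually_lt_nhds hα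
    have : ∀ᶠ ε in nhdsWithin (0:ℝ) (Set.Ioi 0),
        a < l ^ (-α - ε) ∧ ε < α ∧ 0 < ε := by
      filter_upwards [(hev1.and hev2).filter_mono nhdsWithin_le_nhds,
        self_mem_nhdsWithin] with ε h1 h2
      exact ⟨h1.1, h1.2, h2⟩
    obtain ⟨ε, hεa, hεα, hε⟩ := this.exists
    filter_upwards [bounds ε hε hεα] with x hx
    exact lt_of_lt_of_le hεa hx.1
  · intro b hb
    have hc1 : Tendsto (fun ε : ℝ => l ^ (ε - α)) (nhds 0) (nhds (l ^ (-α))) := by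
      have hsub : Continuous fun ε : ℝ => ε - α := by continuity
      have := (hc.comp hsub).tendsto 0
      simpa [Function.comp_def] using this
    have hev1 : ∀ᶠ ε in nhds (0:ℝ), l ^ (ε - α) < b := hc1.eventually (eventually_lt_nhds hb)
    have hev2 : ∀ᶠ ε in nhds (0:ℝ), ε < α := eventually_lt_nhds hα
    have : ∀ᶠ ε in nhdsWithin (0:ℝ) (Set.Ioi 0),
        (l ^ (ε - α) < b) ∧ ε < α ∧ 0 < ε := by
      filter_upwards [(hev1.and hev2).filter_mono nhdsWithin_le_nhds,
        self_mem_nhdsWithin] with ε h1 h2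
      exact ⟨h1.1, h1.2, h2⟩
    obtain ⟨ε, hεb, hεα, hε⟩ := this.exists
    filter_upwards [bounds ε hε hεα] with x hx
    exact lt_of_le_of_lt hx.2 hεb


/-- Von Mises condition implies `1 - F` is regularly varying at infinity
with index `-α`. -/
theorem vonMises_implies_regularly_varying
    (F f : ℝ → ℝ) (α : ℝ) (hα : 0 < α)
    (hderiv : ∀ x, HasDerivAt F (f x) x)
    (hf_nonneg : ∀ x, 0 ≤ f x)
    (hF_lt_one : ∀ x, F x < 1)
    (hvm : Tendsto (fun x => x * f x / (1 - F x)) atTop (nhds α)) :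
    ∀ l : ℝ, 0 < l →
      Tendsto (fun x => (1 - F (l * x)) / (1 - F x)) atTop (nhds (l ^ (-α))) := by
  intro l hl0
  rcases le_or_gt 1 l with hl | hl
  · exact vm_key F f α hα hderiv hF_lt_one hvm l hl
  · -- l < 1 : use the result for l⁻¹ ≥ 1 and invert
    have hinv : 1 ≤ l⁻¹ := le_of_lt ((one_lt_inv₀ hl0).mpr hl)
    have hkey := vm_key F f α hα hderiv hF_lt_one hvm l⁻¹ hinv
    have hmul : Tendsto (fun x : ℝ => l * x) atTop atTop :=
      Filter.Tendsto.const_mul_atTop hl0 tendsto_id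
    have hcomp := hkey.comp hmul
    have hne : (l⁻¹ : ℝ) ^ (-α) ≠ 0 := (Real.rpow_pos_of_pos (inv_pos.mpr hl0) _).ne'
    have hinv2 := hcomp.inv₀ hne
    have heqf : (fun x => ((fun y => (1 - F (l⁻¹ * y)) / (1 - F y)) ((fun x : ℝ => l * x) x))⁻¹)
        = fun x => (1 - F (l * x)) / (1 - F x) := by
      funext x
      have h1 : l⁻¹ * (l * x) = x := by field_simp
      simp only [Function.comp, h1, inv_div]
    have heqv : ((l⁻¹ : ℝ) ^ (-α))⁻¹ = l ^ (-α) := by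
      rw [Real.inv_rpow hl0.le, inv_inv]
    rw [Function.comp_def] at hinv2
    -- hinv2 : Tendsto (fun x => (... (l*x))⁻¹) atTop (nhds ((l⁻¹ ^ (-α))⁻¹))
    rw [heqv] at hinv2
    convert hinv2 using 2 with x
    have h1 : l⁻¹ * (l * x) = x := by field_simp
    simp [h1, inv_div]
end

section
/- For a nonnegative random variable Y with E[Y^{1/μ + δ}] < ∞ for some μ > 0 and δ > 0, and quantile function Q_Y, the integral ∫_{x_1}^{1} (y(1−y))^{μ} dQ_Y(y) is finite, where x_1 = inf{y : Q_Y(y) ≥ 0}. -/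
open Set Real MeasureTheory Filter

/-- If `Y ≥ 0` has a finite moment of order `1/μ + δ`, then the weighted
Lebesgue–Stieltjes integral `∫_{x₁}^1 (y(1-y))^μ dQ_Y(y)` is finite, where
`Q_Y` is the quantile function of `Y` and `x₁ = inf{y : Q_Y(y) ≥ 0}`. -/
theorem weighted_quantile_integral_finite
    {Ω : Type*} [MeasureSpace Ω] [IsProbabilityMeasure (volume : Measure Ω)]
    (Y : Ω → ℝ) (hYmeas : Measurable Y) (hYpos : ∀ ω, 0 ≤ Y ω)
    (μ δ : ℝ) (hμ : 0 < μ) (hδ : 0 < δ)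
    (hmom : Integrable (fun ω => Y ω ^ (1 / μ + δ)))
    (FY : ℝ → ℝ) (hFY : ∀ x, FY x = (volume {ω | Y ω ≤ x}).toReal)
    (QY : StieltjesFunction ℝ)
    (hQY : ∀ y ∈ Ioo (0 : ℝ) 1, QY y = sInf {x : ℝ | y ≤ FY x})
    (x₁ : ℝ) (hx₁ : x₁ = sInf {y : ℝ | 0 ≤ QY y}) :
    (∫⁻ y in Ioo x₁ 1, ENNReal.ofReal ((y * (1 - y)) ^ μ) ∂QY.measure) < ⊤ := by
  set p : ℝ := 1 / μ + δ with hp_def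
  have hp : 0 < p := by positivity
  -- finiteness of the moment as a lower Lebesgue integral
  have hMfin : (∫⁻ ω, ENNReal.ofReal (Y ω ^ p)) < ⊤ := by
    refine lt_of_le_of_lt (lintegral_mono fun ω => Real.ofReal_le_enorm _) ?_
    exact hmom.hasFiniteIntegral
  set M : ℝ := (∫⁻ ω, ENNReal.ofReal (Y ω ^ p)).toReal with hM_def
  have hM0 : 0 ≤ M := ENNReal.toReal_nonneg
  have hint_eq : (∫⁻ ω, ENNReal.ofReal (Y ω ^ p)) = ENNReal.ofReal M := by
    rw [hM_def, ENNReal.ofReal_toReal hMfin.ne]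
  -- Markov's inequality
  have markov : ∀ t : ℝ, 0 < t → volume {ω | t ≤ Y ω} ≤ ENNReal.ofReal (M / t ^ p) := by
    intro t ht
    have htp : (0:ℝ) < t ^ p := Real.rpow_pos_of_pos ht p
    have hsub : {ω | t ≤ Y ω} ⊆ {ω | ENNReal.ofReal (t ^ p) ≤ ENNReal.ofReal (Y ω ^ p)} :=
      fun ω hω => ENNReal.ofReal_le_ofReal (Real.rpow_le_rpow ht.le hω hp.le)
    have hmeas : AEMeasurable (fun ω => ENNReal.ofReal (Y ω ^ p)) volume :=
      (((Real.continuous_rpow_const hp.le).measurable.comp hYmeas).ennreal_ofReal).aemeasurable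
    have key := mul_meas_ge_le_lintegral₀ hmeas (ENNReal.ofReal (t ^ p))
    rw [hint_eq] at key
    have h2 : ENNReal.ofReal (t ^ p) * volume {ω | t ≤ Y ω} ≤ ENNReal.ofReal M :=
      le_trans (mul_le_mul_right (measure_mono hsub) _) key
    rw [ENNReal.ofReal_div_of_pos htp,
      ENNReal.le_div_iff_mul_le (Or.inl (ENNReal.ofReal_pos.mpr htp).ne')
        (Or.inl ENNReal.ofReal_ne_top), mul_comm]
    exact h2
  -- the cdf vanishes on negatives
  have hFY0 : ∀ x < (0:ℝ), FY x = 0 := by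
    intro x hx
    have : {ω | Y ω ≤ x} = ∅ :=
      eq_empty_iff_forall_notMem.mpr fun ω h => absurd (lt_of_lt_of_le hx (hYpos ω)) (not_lt.mpr h)
    rw [hFY, this, measure_empty, ENNReal.toReal_zero]
  -- the quantile function is nonnegative on (0,1)
  have hQYnn : ∀ y ∈ Ioo (0:ℝ) 1, 0 ≤ QY y := by
    intro y hy
    rw [hQY y hy]
    refine Real.sInf_nonneg fun x hx => ?_
    by_contra hneg
    push_neg at hneg
    rw [mem_setOf_eq, hFY0 x hneg] at hx
    exact absurd (lt_of_lt_of_le hy.1 hx) (lt_irrefl 0)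
  have hx₁le : x₁ ≤ 1/2 := by
    rw [hx₁]
    by_cases hbdd : BddBelow {y : ℝ | 0 ≤ QY y}
    · exact csInf_le hbdd (hQYnn (1/2) (by norm_num))
    · rw [Real.sInf_of_not_bddBelow hbdd]; norm_num
  -- tail bound on the quantile function
  have tail : ∀ y ∈ Ioo (1/2 : ℝ) 1, QY y ≤ ((M+1)/(1-y)) ^ (1/p) := by
    intro y hy
    have h1y : (0:ℝ) < 1 - y := by linarith [hy.2]
    set b : ℝ := ((M+1)/(1-y)) ^ (1/p) with hb_def
    have hbpos : 0 < b := Real.rpow_pos_of_pos (by positivity) _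
    have hbp : b ^ p = (M+1)/(1-y) := by
      rw [hb_def, one_div, Real.rpow_inv_rpow (by positivity) hp.ne']
    have htail : volume {ω | b < Y ω} ≤ ENNReal.ofReal (M * (1-y) / (M+1)) := by
      refine le_trans (measure_mono fun ω (h : b < Y ω) => h.le) ?_
      refine le_trans (markov b hbpos) (le_of_eq ?_)
      rw [hbp, div_div_eq_mul_div]
    have hs1 : M * (1-y) / (M+1) < 1 - y := by
      rw [div_lt_iff₀ (by positivity)]
      nlinarith
    have hcompl : {ω | Y ω ≤ b}ᶜ = {ω | b < Y ω} := by ext ω; simp [not_le]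
    have hmeasb : MeasurableSet {ω | Y ω ≤ b} := measurableSet_le hYmeas measurable_const
    have hadd : volume {ω | Y ω ≤ b} + volume {ω | b < Y ω} = 1 := by
      rw [← hcompl, measure_add_measure_compl hmeasb, measure_univ]
    have ht1 : (volume {ω | b < Y ω}).toReal ≤ M*(1-y)/(M+1) := by
      have := ENNReal.toReal_mono ENNReal.ofReal_ne_top htail
      rwa [ENNReal.toReal_ofReal (by positivity)] at this
    have hsum : (volume {ω | Y ω ≤ b}).toReal + (volume {ω | b < Y ω}).toReal = 1 := by
      rw [← ENNReal.toReal_add (measure_ne_top _ _) (measure_ne_top _ _), hadd, ENNReal.toReal_one]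
    have hFYb : y ≤ FY b := by rw [hFY]; linarith
    have hbdd : BddBelow {x : ℝ | y ≤ FY x} := by
      refine ⟨0, fun x hx => ?_⟩
      by_contra h
      push_neg at h
      rw [mem_setOf_eq, hFY0 x h] at hx
      linarith [hy.1]
    rw [hQY y ⟨lt_trans (by norm_num) hy.1, hy.2⟩]
    exact csInf_le hbdd hFYb
  -- split the integral
  have hsplit : Ioo x₁ 1 ⊆ Ioc x₁ (1/2) ∪ Ioo (1/2) 1 := by
    intro y hy
    rcases le_or_gt y (1/2) with h | h
    · exact Or.inl ⟨hy.1, h⟩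
    · exact Or.inr ⟨h, hy.2⟩
  have main : (∫⁻ y in Ioo x₁ 1, ENNReal.ofReal ((y * (1 - y)) ^ μ) ∂QY.measure)
      ≤ (∫⁻ y in Ioc x₁ (1/2), ENNReal.ofReal ((y * (1 - y)) ^ μ) ∂QY.measure)
        + ∫⁻ y in Ioo (1/2) 1, ENNReal.ofReal ((y * (1 - y)) ^ μ) ∂QY.measure :=
    le_trans (lintegral_mono_set hsplit) (lintegral_union_le _ _ _)
  -- part A : the bounded part
  have hA : (∫⁻ y in Ioc x₁ (1/2), ENNReal.ofReal ((y * (1 - y)) ^ μ) ∂QY.measure) < ⊤ := by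
    set K : ℝ := ((1 + |x₁|)^2) ^ μ with hK_def
    have hbound : ∀ y ∈ Ioc x₁ (1/2:ℝ),
        ENNReal.ofReal ((y*(1-y))^μ) ≤ ENNReal.ofReal K := by
      intro y hy
      apply ENNReal.ofReal_le_ofReal
      calc (y*(1-y))^μ ≤ |(y*(1-y))^μ| := le_abs_self _
        _ ≤ |y*(1-y)|^μ := Real.abs_rpow_le_abs_rpow _ _
        _ ≤ ((1+|x₁|)^2)^μ := by
            apply Real.rpow_le_rpow (abs_nonneg _) ?_ hμ.le
            rw [abs_mul]
            have h1 : |y| ≤ 1 + |x₁| :=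
              abs_le.mpr ⟨by linarith [neg_abs_le x₁, hy.1], by linarith [abs_nonneg x₁, hy.2]⟩
            have h2 : |1 - y| ≤ 1 + |x₁| :=
              abs_le.mpr ⟨by linarith [abs_nonneg x₁, hy.2], by linarith [neg_abs_le x₁, hy.1]⟩
            calc |y| * |1-y| ≤ (1+|x₁|) * (1+|x₁|) :=
                  mul_le_mul h1 h2 (abs_nonneg _) (by positivity)
              _ = (1+|x₁|)^2 := by ring
    calc (∫⁻ y in Ioc x₁ (1/2), ENNReal.ofReal ((y * (1 - y)) ^ μ) ∂QY.measure)
        ≤ ∫⁻ _ in Ioc x₁ (1/2), ENNReal.ofReal K ∂QY.measure :=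
          setLIntegral_mono' measurableSet_Ioc hbound
      _ = ENNReal.ofReal K * QY.measure (Ioc x₁ (1/2)) := setLIntegral_const _ _
      _ < ⊤ := ENNReal.mul_lt_top ENNReal.ofReal_lt_top
          (by rw [QY.measure_Ioc]; exact ENNReal.ofReal_lt_top)
  -- part B : near 1, use the layer-cake formula
  have hB : (∫⁻ y in Ioo (1/2:ℝ) 1, ENNReal.ofReal ((y * (1 - y)) ^ μ) ∂QY.measure) < ⊤ := by
    set r : ℝ := 1/(μ*p) with hr_def
    have hμp : μ * p = 1 + μ*δ := by rw [hp_def]; field_simp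
    have hr0 : 0 < r := by rw [hr_def]; positivity
    have hr1 : r < 1 := by
      rw [hr_def, hμp, div_lt_one (by positivity)]
      nlinarith
    set c : ℝ := (1/2:ℝ) ^ μ with hc_def
    have hc0 : 0 < c := Real.rpow_pos_of_pos (by norm_num) _
    have hf_mble : AEMeasurable (fun y : ℝ => (y*(1-y))^μ)
        (QY.measure.restrict (Ioo (1/2) 1)) :=
      ((Real.continuous_rpow_const hμ.le).measurable.comp
        (measurable_id.mul (measurable_const.sub measurable_id))).aemeasurable
    have hf_nn : 0 ≤ᵐ[QY.measure.restrict (Ioo (1/2) 1)] fun y => (y*(1-y))^μ := by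
      filter_upwards [ae_restrict_mem measurableSet_Ioo] with y hy
      have hy1 : (1:ℝ)/2 < y := hy.1
      have hy2 : y < 1 := hy.2
      exact Real.rpow_nonneg (by nlinarith) _
    rw [lintegral_eq_lintegral_meas_lt _ hf_nn hf_mble]
    have hbound : ∀ t ∈ Ioi (0:ℝ),
        (QY.measure.restrict (Ioo (1/2) 1)) {y | t < (y*(1-y))^μ}
          ≤ (Ioo (0:ℝ) c).indicator (fun t => ENNReal.ofReal ((M+1)^(1/p) * t ^ (-r))) t := by
      intro t ht
      rw [mem_Ioi] at ht
      rw [Measure.restrict_apply' measurableSet_Ioo]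
      rcases lt_or_ge t c with htc | htc
      · rw [Set.indicator_of_mem (show t ∈ Ioo (0:ℝ) c from ⟨ht, htc⟩)]
        set s : ℝ := t ^ (1/μ) with hs_def
        have hs0 : 0 < s := Real.rpow_pos_of_pos ht _
        have hshalf : s < 1/2 := by
          have h1 : s < c ^ (1/μ) := by
            rw [hs_def]
            exact Real.rpow_lt_rpow ht.le htc (by positivity)
          rwa [hc_def, ← Real.rpow_mul (by norm_num : (0:ℝ) ≤ 1/2), mul_one_div,
              div_self hμ.ne', Real.rpow_one] at h1
        have hsub : {y | t < (y*(1-y))^μ} ∩ Ioo ((1:ℝ)/2) 1 ⊆ Ioc (1/2) (1 - s) := by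
          rintro y ⟨hty, hy⟩
          rw [mem_setOf_eq] at hty
          have hy0 : (0:ℝ) < y := lt_trans (by norm_num) hy.1
          have h1y : (0:ℝ) < 1 - y := by linarith [hy.2]
          have h1 : (y*(1-y))^μ ≤ (1-y)^μ :=
            Real.rpow_le_rpow (by positivity) (by nlinarith [hy.2]) hμ.le
          have h2 : t < (1-y)^μ := lt_of_lt_of_le hty h1
          have h3 : s < 1 - y := by
            have h4 := Real.rpow_lt_rpow ht.le h2 (by positivity : (0:ℝ) < 1/μ)
            rwa [one_div, Real.rpow_rpow_inv h1y.le hμ.ne', ← one_div, ← hs_def] at h4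
          exact ⟨hy.1, by linarith⟩
        have hexp : (1/μ) * (-(1/p)) = -r := by
          rw [hr_def]; field_simp
        calc QY.measure ({y | t < (y*(1-y))^μ} ∩ Ioo (1/2) 1)
            ≤ QY.measure (Ioc (1/2) (1-s)) := measure_mono hsub
          _ = ENNReal.ofReal (QY (1-s) - QY (1/2)) := QY.measure_Ioc _ _
          _ ≤ ENNReal.ofReal (QY (1-s)) :=
              ENNReal.ofReal_le_ofReal (by linarith [hQYnn (1/2) ⟨by norm_num, by norm_num⟩])
          _ ≤ ENNReal.ofReal (((M+1)/(1-(1-s)))^(1/p)) :=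
              ENNReal.ofReal_le_ofReal (tail (1-s) ⟨by linarith, by linarith⟩)
          _ = ENNReal.ofReal ((M+1)^(1/p) * t^(-r)) := by
              congr 1
              have hss : 1 - (1-s) = s := by ring
              rw [hss, div_eq_mul_inv, Real.mul_rpow (by linarith) (by positivity),
                Real.inv_rpow hs0.le]
              congr 1
              rw [← Real.rpow_neg hs0.le, hs_def, ← Real.rpow_mul ht.le, hexp]
      · rw [Set.indicator_of_notMem (show t ∉ Ioo (0:ℝ) c from fun h => absurd h.2 (not_lt.mpr htc))]
        have hempty : {y | t < (y*(1-y))^μ} ∩ Ioo ((1:ℝ)/2) 1 = ∅ := by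
          rw [eq_empty_iff_forall_notMem]
          rintro y ⟨hty, hy⟩
          rw [mem_setOf_eq] at hty
          have hb : (y*(1-y))^μ ≤ c := by
            rw [hc_def]
            exact Real.rpow_le_rpow (by nlinarith [hy.1, hy.2]) (by nlinarith [hy.1, hy.2]) hμ.le
          linarith [lt_of_lt_of_le hty hb]
        rw [hempty, measure_empty]
    calc (∫⁻ t in Ioi (0:ℝ),
            (QY.measure.restrict (Ioo (1/2) 1)) {y | t < (y*(1-y))^μ})
        ≤ ∫⁻ t in Ioi (0:ℝ),
            (Ioo (0:ℝ) c).indicator (fun t => ENNReal.ofReal ((M+1)^(1/p) * t ^ (-r))) t :=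
          setLIntegral_mono' measurableSet_Ioi hbound
      _ ≤ ∫⁻ t, (Ioo (0:ℝ) c).indicator
            (fun t => ENNReal.ofReal ((M+1)^(1/p) * t ^ (-r))) t :=
          setLIntegral_le_lintegral _ _
      _ = ∫⁻ t in Ioo (0:ℝ) c, ENNReal.ofReal ((M+1)^(1/p) * t ^ (-r)) :=
          lintegral_indicator measurableSet_Ioo _
      _ = ∫⁻ t in Ioo (0:ℝ) c,
            ENNReal.ofReal ((M+1)^(1/p)) * ENNReal.ofReal (t ^ (-r)) := by
          apply lintegral_congr fun t => ?_
          rw [ENNReal.ofReal_mul (by positivity)]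
      _ = ENNReal.ofReal ((M+1)^(1/p)) * ∫⁻ t in Ioo (0:ℝ) c, ENNReal.ofReal (t ^ (-r)) :=
          lintegral_const_mul' _ _ ENNReal.ofReal_ne_top
      _ < ⊤ := by
          apply ENNReal.mul_lt_top ENNReal.ofReal_lt_top
          have hint : IntegrableOn (fun t : ℝ => t ^ (-r)) (Ioo 0 c) :=
            (intervalIntegral.integrableOn_Ioo_rpow_iff hc0).mpr (by linarith)
          refine lt_of_le_of_lt (lintegral_mono fun t => Real.ofReal_le_enorm _) ?_
          exact hint.2
  exact lt_of_le_of_lt main (ENNReal.add_lt_top.mpr ⟨hA, hB⟩)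
end

section
/- If F_Y belongs to the maximal domain of attraction of the Gumbel distribution (equivalently, 1−F_Y is rapidly varying so that E[(Y^+)^p] < ∞ for all p > 0), then for the quantile function Q_Y and any λ > 1, lim_{n→∞} [Q_Y(1−k_n/(λ n)) − Q_Y(1−λ k_n/n)] · L(n/k_n) = 2 log λ, where L(1/y) := y/ f_Y(Q_Y(1−y)) is the reciprocal auxiliary function, i.e., f_YQ_Y(1−y) = y L(1/y) with L slowly varying, and k_n → ∞, k_n = o(n). -/
open Set Filter Real MeasureTheory

/-- If two subsets of an interval have large measure, they intersect. -/
lemma inter_nonempty_of_measure {S T : Set ℝ} {c d e : ℝ}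
    (hT : MeasurableSet T) (he0 : 0 ≤ e)
    (hS3 : S ⊆ Icc c d) (hT3 : T ⊆ Icc c d)
    (hSm : ENNReal.ofReal e < volume S) (hTm : ENNReal.ofReal e < volume T)
    (he : d - c ≤ 2 * e) :
    (S ∩ T).Nonempty := by
  rw [Set.nonempty_iff_ne_empty]
  intro hemp
  have hdisj : Disjoint S T := Set.disjoint_iff_inter_eq_empty.mpr hemp
  have h1 : volume (S ∪ T) = volume S + volume T := measure_union hdisj hT
  have h2 : volume (S ∪ T) ≤ volume (Icc c d) :=
    measure_mono (Set.union_subset hS3 hT3)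
  rw [Real.volume_Icc] at h2
  have h3 : ENNReal.ofReal e + ENNReal.ofReal e < volume S + volume T :=
    ENNReal.add_lt_add hSm hTm
  rw [← ENNReal.ofReal_add he0 he0] at h3
  have h4 : ENNReal.ofReal (d - c) ≤ ENNReal.ofReal (e + e) := by
    apply ENNReal.ofReal_le_ofReal; linarith
  exact absurd (lt_of_le_of_lt (h1 ▸ le_trans h2 h4) h3) (lt_irrefl _)

/-- The set of translates `v` that are uniformly good from stage `m` on,
eventually has measure close to full. -/
lemma good_set_large (f : ℝ → ℝ) (hf : Measurable f) (a ε4 : ℝ) (ha : 0 < a) 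
    (z : ℕ → ℝ)
    (hconv : ∀ v : ℝ, Tendsto (fun j => f (z j + v) - f (z j)) atTop (nhds 0)) :
    (∀ m, MeasurableSet (Icc (-(2*a)) (2*a) ∩
        ⋂ j, {v | m ≤ j → |f (z j + v) - f (z j)| ≤ ε4})) ∧
    ∀ᶠ m in atTop, ENNReal.ofReal (7*a/2) < volume (Icc (-(2*a)) (2*a) ∩
        ⋂ j, {v | m ≤ j → |f (z j + v) - f (z j)| ≤ ε4}) ∨ ¬ (0 < ε4) := by
  set B : ℕ → Set ℝ := fun m => Icc (-(2*a)) (2*a) ∩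
      ⋂ j, {v | m ≤ j → |f (z j + v) - f (z j)| ≤ ε4} with hB
  have hmeas : ∀ m, MeasurableSet (B m) := by
    intro m
    apply measurableSet_Icc.inter
    apply MeasurableSet.iInter
    intro j
    by_cases h : m ≤ j
    · simp only [h, true_implies]
      exact measurableSet_le ((hf.comp (measurable_const.add measurable_id)).sub
        measurable_const).abs measurable_const
    · simp only [h, false_implies, setOf_true]
      exact MeasurableSet.univ
  refine ⟨hmeas, ?_⟩
  by_cases hε : 0 < ε4
  swap
  · exact Eventually.of_forall fun m => Or.inr hε
  have hmono : Monotone B := by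
    intro m m' hmm'
    apply Set.inter_subset_inter_right
    apply Set.iInter_mono
    intro j
    intro v hv hj
    exact hv (le_trans hmm' hj)
  have hunion : (⋃ m, B m) = Icc (-(2*a)) (2*a) := by
    apply Set.Subset.antisymm
    · exact Set.iUnion_subset fun m => Set.inter_subset_left
    · intro v hv
      have := (hconv v).eventually (Metric.closedBall_mem_nhds (0:ℝ) hε) 
      rw [eventually_atTop] at this
      obtain ⟨m, hm⟩ := this
      refine Set.mem_iUnion.mpr ⟨m, hv, Set.mem_iInter.mpr fun j hj => ?_⟩
      have := hm j hj
      simpa [Real.dist_eq] using this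
  have htend : Tendsto (fun m => volume (B m)) atTop (nhds (volume (Icc (-(2*a)) (2*a)))) := by
    have := tendsto_measure_iUnion_atTop (μ := volume) hmono
    rwa [hunion] at this
  have hlt : ENNReal.ofReal (7*a/2) < volume (Icc (-(2*a)) (2*a)) := by
    rw [Real.volume_Icc]
    apply ENNReal.ofReal_lt_ofReal_iff_of_nonneg (by positivity) |>.mpr
    linarith
  exact (htend.eventually (eventually_gt_nhds hlt)).mono fun m hm => Or.inl hm
lemma uniform_slow_variation (f : ℝ → ℝ) (hf : Measurable f)
    (hconv : ∀ u : ℝ, Tendsto (fun x => f (x + u) - f x) atTop (nhds 0))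
    (x : ℕ → ℝ) (hx : Tendsto x atTop atTop)
    (a ε : ℝ) (ha : 0 < a) (hε : 0 < ε) :
    ∀ᶠ n in atTop, ∀ u ∈ Icc (-a) a, |f (x n + u) - f (x n)| ≤ ε := by
  by_contra hcon
  rw [Filter.not_eventually] at hcon
  obtain ⟨φ, hφ, hbad⟩ := Filter.extraction_of_frequently_atTop hcon
  -- choose bad u's
  have hchoice : ∀ j, ∃ u ∈ Icc (-a) a, ε < |f (x (φ j) + u) - f (x (φ j))| := by
    intro j
    have := hbad j
    push_neg at this
    obtain ⟨u, hu1, hu2⟩ := this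
    exact ⟨u, hu1, hu2⟩
  choose u hu hbadu using hchoice
  set y : ℕ → ℝ := fun j => x (φ j) with hy
  have hytend : Tendsto y atTop atTop := hx.comp hφ.tendsto_atTop
  set z : ℕ → ℝ := fun j => y j + u j with hz
  have hztend : Tendsto z atTop atTop := by
    apply tendsto_atTop_mono (fun j => ?_) (tendsto_atTop_add_const_right _ (-a) hytend)
    have := (hu j).1
    simp only [hz]
    linarith
  have hconvy : ∀ v : ℝ, Tendsto (fun j => f (y j + v) - f (y j)) atTop (nhds 0) :=
    fun v => (hconv v).comp hytend
  have hconvz : ∀ v : ℝ, Tendsto (fun j => f (z j + v) - f (z j)) atTop (nhds 0) :=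
    fun v => (hconv v).comp hztend
  obtain ⟨hBmeas, hBbig⟩ := good_set_large f hf a (ε/4) ha y hconvy
  obtain ⟨hCmeas, hCbig⟩ := good_set_large f hf a (ε/4) ha z hconvz
  have hε4 : 0 < ε/4 := by linarith
  obtain ⟨m, hBm, hCm⟩ := ((hBbig.and hCbig).exists)
  replace hBm := hBm.resolve_right (not_not_intro hε4)
  replace hCm := hCm.resolve_right (not_not_intro hε4)
  set B := Icc (-(2*a)) (2*a) ∩ ⋂ j, {v | m ≤ j → |f (y j + v) - f (y j)| ≤ ε/4} with hBdef
  set C := Icc (-(2*a)) (2*a) ∩ ⋂ j, {v | m ≤ j → |f (z j + v) - f (z j)| ≤ ε/4} with hCdef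
  set D := (fun v => v + u m) ⁻¹' B with hD
  have hDvol : volume D = volume B := measure_preimage_add_right volume (u m) B
  have hDsub : D ⊆ Icc (-(3*a)) (3*a) := by
    intro v hv
    have h1 : v + u m ∈ Icc (-(2*a)) (2*a) := hv.1
    have h2 := hu m
    simp only [mem_Icc] at *
    constructor <;> [linarith [h1.1, h2.1, h2.2]; linarith [h1.2, h2.1, h2.2]]
  have hCsub : C ⊆ Icc (-(3*a)) (3*a) := by
    intro v hv
    have h1 : v ∈ Icc (-(2*a)) (2*a) := hv.1
    simp only [mem_Icc] at *
    constructor <;> linarith [h1.1, h1.2]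
  have hne : (D ∩ C).Nonempty := by
    apply inter_nonempty_of_measure (hCmeas m) (by positivity) hDsub hCsub
      (by rw [hDvol]; exact hBm) hCm
    linarith
  obtain ⟨v, hvD, hvC⟩ := hne
  have h1 : |f (y m + (v + u m)) - f (y m)| ≤ ε/4 := by
    have := hvD.2
    rw [Set.mem_iInter] at this
    exact this m (le_refl m)
  have h2 : |f (z m + v) - f (z m)| ≤ ε/4 := by
    have := hvC.2
    rw [Set.mem_iInter] at this
    exact this m (le_refl m)
  have hkey : |f (y m + u m) - f (y m)| ≤ ε/2 := by
    have heq : z m + v = y m + (v + u m) := by simp only [hz]; ring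
    rw [heq] at h2
    have hzm : z m = y m + u m := rfl
    rw [hzm] at h2
    calc |f (y m + u m) - f (y m)|
        ≤ |f (y m + u m) - f (y m + (v + u m))| + |f (y m + (v + u m)) - f (y m)| :=
          abs_sub_le _ _ _
      _ ≤ ε/4 + ε/4 := add_le_add (by rw [abs_sub_comm]; exact h2) h1
      _ = ε/2 := by ring
  exact absurd hkey (not_le.mpr (lt_of_lt_of_le (by linarith [hbadu m]) (le_refl _)))
set_option maxHeartbeats 1600000 in
/-- For `F_Y ∈ MDA(Λ)` with von Mises representation
`f_YQ_Y(1-y) = y L(1/y)`, `L` slowly varying, and `k_n → ∞`, `k_n = o(n)`,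
for any `λ > 1`:
`(Q_Y(1 - k_n/(λn)) - Q_Y(1 - λk_n/n)) · L(n/k_n) → 2 log λ`. -/
theorem gumbel_quantile_spread
    (QY L : ℝ → ℝ)
    (hSV : ∀ l : ℝ, 0 < l → Tendsto (fun t => L (l * t) / L t) atTop (nhds 1))
    (hLpos : ∀ᶠ t in atTop, 0 < L t)
    (hQY' : ∀ y ∈ Ioo (0 : ℝ) 1, HasDerivAt QY (1 / (y * L (1 / y))) (1 - y))
    (k : ℕ → ℝ)
    (hk : Tendsto k atTop atTop)
    (hkn : Tendsto (fun n : ℕ => k n / n) atTop (nhds 0))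
    (lam : ℝ) (hlam : 1 < lam) :
    Tendsto
      (fun n : ℕ =>
        (QY (1 - k n / (lam * n)) - QY (1 - lam * k n / n)) * L ((n : ℝ) / k n))
      atTop (nhds (2 * Real.log lam)) := by
  obtain ⟨T, hT⟩ := eventually_atTop.mp hLpos
  set T' : ℝ := max T 2 with hT'def
  have hT'2 : (2:ℝ) ≤ T' := le_max_right _ _
  have hTT' : T ≤ T' := le_max_left _ _
  -- the measurable version of L
  set LL : ℝ → ℝ := fun t => if 1 < t then t / deriv QY (1 - 1/t) else 1 with hLLdef
  have hLLmeas : Measurable LL := by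
    apply Measurable.ite (measurableSet_lt measurable_const measurable_id)
    · exact measurable_id.div ((measurable_deriv QY).comp
        (measurable_const.sub (measurable_const.div measurable_id)))
    · exact measurable_const
  have LLeq : ∀ t : ℝ, 1 < t → LL t = L t := by
    intro t ht
    have ht0 : (0:ℝ) < t := lt_trans zero_lt_one ht
    have hy : 1/t ∈ Ioo (0:ℝ) 1 := ⟨by positivity, by rw [div_lt_one ht0]; exact ht⟩
    have hder := hQY' (1/t) hy
    rw [one_div_one_div] at hder
    have hd : deriv QY (1 - 1/t) = 1/(1/t * L t) := hder.deriv
    simp only [hLLdef, if_pos ht, hd, one_div (1/t * L t), div_inv_eq_mul]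
    field_simp
  -- the additive version f
  set f : ℝ → ℝ := fun x => Real.log (LL (Real.exp x)) with hfdef
  have hf : Measurable f := Real.measurable_log.comp (hLLmeas.comp Real.measurable_exp)
  have hconvf : ∀ u : ℝ, Tendsto (fun x => f (x + u) - f x) atTop (nhds 0) := by
    intro u
    have hl : (0:ℝ) < Real.exp u := Real.exp_pos u
    have h2 : Tendsto (fun x => L (Real.exp u * Real.exp x) / L (Real.exp x)) atTop (nhds 1) :=
      (hSV _ hl).comp Real.tendsto_exp_atTop
    have h3 : Tendsto (fun x => Real.log (L (Real.exp u * Real.exp x) / L (Real.exp x)))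
        atTop (nhds 0) := by
      have := (Real.continuousAt_log one_ne_zero).tendsto.comp h2
      rwa [Real.log_one] at this
    apply h3.congr'
    have hA : ∀ᶠ x : ℝ in atTop, T' ≤ Real.exp x := Real.tendsto_exp_atTop.eventually_ge_atTop T'
    have hB : ∀ᶠ x : ℝ in atTop, T' ≤ Real.exp u * Real.exp x :=
      (Real.tendsto_exp_atTop.const_mul_atTop hl).eventually_ge_atTop T'
    filter_upwards [hA, hB] with x hx1 hx2
    have he1 : (1:ℝ) < Real.exp x := by linarith
    have he2 : (1:ℝ) < Real.exp u * Real.exp x := by linarith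
    have hp1 : 0 < L (Real.exp x) := hT _ (le_trans hTT' hx1)
    have hp2 : 0 < L (Real.exp u * Real.exp x) := hT _ (le_trans hTT' hx2)
    simp only [hfdef]
    rw [Real.exp_add, mul_comm (Real.exp x) (Real.exp u), LLeq _ he2, LLeq _ he1,
      Real.log_div (ne_of_gt hp2) (ne_of_gt hp1)]
  -- the sequence t n → ∞
  set t : ℕ → ℝ := fun n => (n : ℝ) / k n with htdef
  have htt : Tendsto t atTop atTop := by
    have hpos : ∀ᶠ n in atTop, k n / (n:ℝ) ∈ Ioi (0:ℝ) := by
      filter_upwards [hk.eventually_ge_atTop 1,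
        tendsto_natCast_atTop_atTop.eventually_ge_atTop (1:ℝ)] with n h1 h2
      exact mem_Ioi.mpr (div_pos (by linarith) (by linarith))
    have h0 : Tendsto (fun n : ℕ => k n / (n:ℝ)) atTop (nhdsWithin 0 (Ioi 0)) :=
      tendsto_nhdsWithin_iff.mpr ⟨hkn, hpos⟩
    have h1 := h0.inv_tendsto_nhdsGT_zero
    apply h1.congr
    intro n
    simp [htdef, inv_div]
  set x : ℕ → ℝ := fun n => Real.log (t n) with hxdef
  have hxt : Tendsto x atTop atTop := Real.tendsto_log_atTop.comp htt
  set c : ℝ := 2 * Real.log lam with hcdef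
  have hloglam : 0 < Real.log lam := Real.log_pos hlam
  have hc : 0 < c := by simp only [hcdef]; linarith
  rw [Metric.tendsto_atTop]
  intro ε hε
  set ε' : ℝ := min (ε/(2*c)) 1 with hε'def
  have hε'pos : 0 < ε' := lt_min (by positivity) one_pos
  have hε'le : ε' ≤ ε/(2*c) := min_le_left _ _
  have hε'1 : ε' ≤ 1 := min_le_right _ _
  set δ : ℝ := Real.log (1 + ε') with hδdef
  have hδ : 0 < δ := Real.log_pos (by linarith)
  have hexpδ : Real.exp δ = 1 + ε' := Real.exp_log (by linarith)
  have hexpnδ : Real.exp (-δ) = (1 + ε')⁻¹ := by rw [Real.exp_neg, hexpδ]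
  have hunif := uniform_slow_variation f hf hconvf x hxt (Real.log lam) δ hloglam hδ
  have hev : ∀ᶠ n in atTop, dist ((QY (1 - k n / (lam * n)) - QY (1 - lam * k n / n))
      * L ((n : ℝ) / k n)) c < ε := by
    filter_upwards [hk.eventually_ge_atTop 1,
      tendsto_natCast_atTop_atTop.eventually_ge_atTop (1:ℝ),
      htt.eventually_ge_atTop (lam * T' + 1), hunif] with n hkn1 hn1 htn hun
    -- basic positivity
    have hknpos : 0 < k n := by linarith
    have hnpos : 0 < (n:ℝ) := by linarith
    have hlam0 : (0:ℝ) < lam := by linarith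
    have hlamT' : T' ≤ lam * T' := le_mul_of_one_le_left (by linarith) (le_of_lt hlam)
    have hlamlam : lam ≤ lam * T' := le_mul_of_one_le_right (le_of_lt hlam0) (by linarith)
    have htpos : 0 < t n := by linarith
    have htgtlam : lam < t n := by linarith
    have ht1 : 1 < t n := by linarith
    have htT : T ≤ t n := by linarith
    have htdivlam : T' ≤ t n / lam := by
      rw [le_div_iff₀ hlam0, mul_comm]
      linarith
    have hLtpos : 0 < L (t n) := hT _ htT
    -- the endpoints
    set a' : ℝ := 1/(lam * t n) with ha'def
    set b' : ℝ := lam / t n with hb'def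
    have ha'pos : 0 < a' := by positivity
    have hab : a' ≤ b' := by
      rw [ha'def, hb'def, div_le_div_iff₀ (by positivity) htpos]
      have hll : (1:ℝ)*1 ≤ lam*lam :=
        mul_le_mul (le_of_lt hlam) (le_of_lt hlam) zero_le_one (by linarith)
      calc 1 * t n = 1*1*(t n) := by ring
        _ ≤ lam*lam*(t n) := mul_le_mul_of_nonneg_right hll (le_of_lt htpos)
        _ = lam * (lam * t n) := by ring
    have hb'lt1 : b' < 1 := by rw [hb'def, div_lt_one htpos]; exact htgtlam
    -- key pointwise bounds on Icc a' b'
    have key : ∀ y ∈ Icc a' b', 0 < y ∧ y < 1 ∧ 0 < L (1/y) ∧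
        Real.exp (-δ) * L (t n) ≤ L (1/y) ∧ L (1/y) ≤ Real.exp δ * L (t n) := by
      intro y hy
      have hy0 : 0 < y := lt_of_lt_of_le ha'pos hy.1
      have hy1 : y < 1 := lt_of_le_of_lt hy.2 hb'lt1
      have hyb : y * t n ≤ lam := by
        have := hy.2
        rw [hb'def, div_eq_mul_inv] at this
        calc y * t n ≤ lam * (t n)⁻¹ * t n := by
              apply mul_le_mul_of_nonneg_right this (le_of_lt htpos)
          _ = lam := by field_simp
      have hya : 1 ≤ y * (lam * t n) := by
        have h := hy.1
        rw [ha'def] at h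
        calc (1:ℝ) = 1/(lam * t n) * (lam * t n) := by field_simp
          _ ≤ y * (lam * t n) := by
              apply mul_le_mul_of_nonneg_right h (by positivity)
      have hinv_lb : t n / lam ≤ 1/y := by
        rw [div_le_div_iff₀ hlam0 hy0]
        linarith [hyb, (mul_comm (t n) y : t n * y = y * t n)]
      have hinv_ub : 1/y ≤ lam * t n := by
        rw [div_le_iff₀ hy0]
        linarith [hya, (mul_comm (lam * t n) y : lam * t n * y = y * (lam * t n))]
      have hinvT' : T' ≤ 1/y := le_trans htdivlam hinv_lb
      have hinv1 : 1 < 1/y := by linarith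
      have hLpos' : 0 < L (1/y) := hT _ (le_trans hTT' hinvT')
      -- apply the uniform bound with u = log(1/y) - log(t n)
      set u : ℝ := Real.log (1/y) - Real.log (t n) with hudef
      have hu : u ∈ Icc (-Real.log lam) (Real.log lam) := by
        have h1 : Real.log (t n / lam) ≤ Real.log (1/y) :=
          Real.log_le_log (by positivity) hinv_lb
        have h2 : Real.log (1/y) ≤ Real.log (lam * t n) :=
          Real.log_le_log (by positivity) hinv_ub
        rw [Real.log_div (ne_of_gt htpos) (ne_of_gt hlam0)] at h1
        rw [Real.log_mul (ne_of_gt hlam0) (ne_of_gt htpos)] at h2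
        constructor <;> simp only [hudef, mem_Icc] <;> linarith
      have hub := hun u hu
      have hxu : x n + u = Real.log (1/y) := by simp only [hxdef, hudef]; ring
      have hfx : f (x n) = Real.log (L (t n)) := by
        simp only [hfdef, hxdef, Real.exp_log htpos, LLeq _ ht1]
      have hfxu : f (x n + u) = Real.log (L (1/y)) := by
        rw [hxu]
        simp only [hfdef, Real.exp_log (by positivity : (0:ℝ) < 1/y), LLeq _ hinv1]
      rw [hfxu, hfx, abs_le] at hub
      refine ⟨hy0, hy1, hLpos', ?_, ?_⟩
      · have h3 : Real.log (L (t n)) - δ ≤ Real.log (L (1/y)) := by linarith [hub.1]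
        calc Real.exp (-δ) * L (t n) = Real.exp (Real.log (L (t n)) - δ) := by
              rw [Real.exp_sub, Real.exp_log hLtpos, Real.exp_neg]; ring
          _ ≤ Real.exp (Real.log (L (1/y))) := Real.exp_le_exp.mpr h3
          _ = L (1/y) := Real.exp_log hLpos'
      · have h3 : Real.log (L (1/y)) ≤ Real.log (L (t n)) + δ := by linarith [hub.2]
        calc L (1/y) = Real.exp (Real.log (L (1/y))) := (Real.exp_log hLpos').symm
          _ ≤ Real.exp (Real.log (L (t n)) + δ) := Real.exp_le_exp.mpr h3
          _ = Real.exp δ * L (t n) := by rw [Real.exp_add, Real.exp_log hLtpos]; ring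
    -- FTC
    set G : ℝ → ℝ := fun y => -(1/(y * L (1/y))) with hGdef
    have hderivG : ∀ y ∈ uIcc a' b', HasDerivAt (fun s => QY (1 - s)) (G y) y := by
      intro y hy
      rw [uIcc_of_le hab] at hy
      obtain ⟨hy0, hy1, _, _, _⟩ := key y hy
      have h0 := hQY' y ⟨hy0, hy1⟩
      have h1 : HasDerivAt (fun s : ℝ => 1 - s) (-1) y := by
        simpa using (hasDerivAt_id y).const_sub 1
      have h2 := h0.comp y h1
      simp only [hGdef]
      exact h2.congr_deriv (by ring)
    -- integrability of G
    have hGG' : EqOn G (fun y => -(1/(y * LL (1/y)))) (Ioc a' b') := by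
      intro y hy
      have hmem : y ∈ Icc a' b' := Ioc_subset_Icc_self hy
      obtain ⟨hy0, hy1, _, _, _⟩ := key y hmem
      have h4 : (1:ℝ) < 1/y := by rw [lt_div_iff₀ hy0]; linarith
      simp only [hGdef, LLeq _ h4]
    have hG'meas : Measurable (fun y : ℝ => -(1/(y * LL (1/y)))) :=
      (measurable_const.div (measurable_id.mul (hLLmeas.comp
        (measurable_const.div measurable_id)))).neg
    have hGint : IntervalIntegrable G volume a' b' := by
      rw [intervalIntegrable_iff, uIoc_of_le hab]
      have hG'int : IntegrableOn (fun y : ℝ => -(1/(y * LL (1/y)))) (Ioc a' b') volume := by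
        apply Measure.integrableOn_of_bounded (M := 1/(a' * (Real.exp (-δ) * L (t n))))
          measure_Ioc_lt_top.ne hG'meas.aestronglyMeasurable
        apply (ae_restrict_mem measurableSet_Ioc).mono fun y hy => ?_
        have hmem : y ∈ Icc a' b' := Ioc_subset_Icc_self hy
        obtain ⟨hy0, hy1, hLp, hlb, _⟩ := key y hmem
        have h5 : 0 < Real.exp (-δ) * L (t n) := by positivity
        have h6 : a' * (Real.exp (-δ) * L (t n)) ≤ y * L (1/y) :=
          mul_le_mul hmem.1 hlb (le_of_lt h5) (le_of_lt hy0)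
        have hLLy : LL (1/y) = L (1/y) := by
          apply LLeq
          rw [lt_div_iff₀ hy0]; linarith
        rw [Real.norm_eq_abs, hLLy,
          abs_neg, abs_of_nonneg (by positivity : (0:ℝ) ≤ 1/(y * L (1/y)))]
        exact one_div_le_one_div_of_le (by positivity) h6
      exact (hG'int.congr_fun (fun y hy => (hGG' hy).symm) measurableSet_Ioc)
    have hposfun : (fun y => 1/(y * L (1/y))) = fun y => -(G y) := by
      funext y; simp [hGdef]
    have hposint : IntervalIntegrable (fun y => 1/(y * L (1/y))) volume a' b' := by
      rw [hposfun]; exact hGint.neg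
    have hFTC := intervalIntegral.integral_eq_sub_of_hasDerivAt hderivG hGint
    have hI : ∫ y in a'..b', 1/(y * L (1/y)) = QY (1 - a') - QY (1 - b') := by
      rw [hposfun, intervalIntegral.integral_neg, hFTC]; ring
    -- the comparison integrals
    have hcontint : ∀ r : ℝ, IntervalIntegrable (fun y => r * (1/y)) volume a' b' := by
      intro r
      apply ContinuousOn.intervalIntegrable
      apply ContinuousOn.mul continuousOn_const
      apply ContinuousOn.div continuousOn_const continuousOn_id
      intro y hy
      rw [uIcc_of_le hab] at hy
      exact ne_of_gt (lt_of_lt_of_le ha'pos hy.1)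
    have hzero : (0:ℝ) ∉ uIcc a' b' := by
      rw [uIcc_of_le hab]
      intro h
      exact absurd h.1 (not_le.mpr ha'pos)
    have hlogint : (∫ y in a'..b', (1:ℝ)/y) = Real.log (b'/a') := integral_one_div hzero
    have hba : b'/a' = lam^2 := by
      rw [ha'def, hb'def, one_div (lam * t n), div_inv_eq_mul]
      field_simp
    have hlog2 : Real.log (b'/a') = c := by
      rw [hba, hcdef, sq, Real.log_mul (ne_of_gt hlam0) (ne_of_gt hlam0)]
      ring
    set clow : ℝ := (Real.exp δ * L (t n))⁻¹ with hclowdef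
    set chigh : ℝ := (Real.exp (-δ) * L (t n))⁻¹ with hchighdef
    have hlowle : ∀ y ∈ Icc a' b', clow * (1/y) ≤ 1/(y * L (1/y)) := by
      intro y hy
      obtain ⟨hy0, _, hLp, _, hub⟩ := key y hy
      have h7 : y * L (1/y) ≤ Real.exp δ * L (t n) * y := by
        have h7a := mul_le_mul_of_nonneg_left hub (le_of_lt hy0)
        linarith [h7a, (by ring : y * (Real.exp δ * L (t n)) = Real.exp δ * L (t n) * y)]
      have h8 : 0 < y * L (1/y) := by positivity
      have h9 : clow * (1/y) = 1/(Real.exp δ * L (t n) * y) := by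
        rw [hclowdef]
        field_simp
      rw [h9]
      exact one_div_le_one_div_of_le h8 h7
    have hhighle : ∀ y ∈ Icc a' b', 1/(y * L (1/y)) ≤ chigh * (1/y) := by
      intro y hy
      obtain ⟨hy0, _, hLp, hlb, _⟩ := key y hy
      have h7 : Real.exp (-δ) * L (t n) * y ≤ y * L (1/y) := by
        have h7a := mul_le_mul_of_nonneg_left hlb (le_of_lt hy0)
        linarith [h7a, (by ring : y * (Real.exp (-δ) * L (t n)) = Real.exp (-δ) * L (t n) * y)]
      have h8 : (0:ℝ) < Real.exp (-δ) * L (t n) * y := by positivity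
      have h9 : chigh * (1/y) = 1/(Real.exp (-δ) * L (t n) * y) := by
        rw [hchighdef]
        field_simp
      rw [h9]
      exact one_div_le_one_div_of_le h8 h7
    have hIlow : clow * c ≤ QY (1 - a') - QY (1 - b') := by
      rw [← hI]
      have h10 := intervalIntegral.integral_mono_on hab (hcontint clow) hposint hlowle
      rwa [intervalIntegral.integral_const_mul, hlogint, hlog2] at h10
    have hIhigh : QY (1 - a') - QY (1 - b') ≤ chigh * c := by
      rw [← hI]
      have h10 := intervalIntegral.integral_mono_on hab hposint (hcontint chigh) hhighle
      rwa [intervalIntegral.integral_const_mul, hlogint, hlog2] at h10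
    -- identify endpoints with the theorem's expressions
    have hea : k n / (lam * (n:ℝ)) = a' := by
      rw [ha'def, htdef]
      rw [eq_comm, div_eq_div_iff (by positivity) (by positivity)]
      field_simp
    have heb : lam * k n / (n:ℝ) = b' := by
      rw [hb'def, htdef, div_div_eq_mul_div]
    -- final arithmetic
    rw [Real.dist_eq, hea, heb]
    set I : ℝ := QY (1 - a') - QY (1 - b') with hIdef
    have hlow2 : c * (1+ε')⁻¹ ≤ I * L (t n) := by
      have h11 : clow * c * L (t n) = c * (1+ε')⁻¹ := by
        rw [hclowdef, hexpδ]
        field_simp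
      calc c * (1+ε')⁻¹ = clow * c * L (t n) := h11.symm
        _ ≤ I * L (t n) := mul_le_mul_of_nonneg_right hIlow (le_of_lt hLtpos)
    have hhigh2 : I * L (t n) ≤ c * (1+ε') := by
      have h12 : chigh * c * L (t n) = c * (1+ε') := by
        rw [hchighdef, hexpnδ]
        field_simp
      calc I * L (t n) ≤ chigh * c * L (t n) :=
            mul_le_mul_of_nonneg_right hIhigh (le_of_lt hLtpos)
        _ = c * (1+ε') := h12
    have hcε : c * ε' ≤ ε/2 := by
      calc c * ε' ≤ c * (ε/(2*c)) := mul_le_mul_of_nonneg_left hε'le (le_of_lt hc)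
        _ = ε/2 := by field_simp
    have hinv2 : 1 - ε' ≤ (1+ε')⁻¹ := by
      rw [← one_div, le_div_iff₀ (by linarith)]
      have h14 : (1-ε')*(1+ε') = 1 - ε'*ε' := by ring
      linarith [mul_self_nonneg ε']
    have hLtn : L (t n) = L ((n:ℝ)/k n) := by rw [htdef]
    rw [← hLtn, abs_lt]
    have h13 : c * (1 - ε') ≤ c * (1+ε')⁻¹ := mul_le_mul_of_nonneg_left hinv2 (le_of_lt hc)
    have e1 : c*(1+ε') = c + c*ε' := by ring
    have e2 : c*(1-ε') = c - c*ε' := by ring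
    clear_value c ε' δ I
    have hfin1 : c - ε/2 ≤ I * L (t n) := by linarith only [hlow2, h13, e2, hcε]
    have hfin2 : I * L (t n) ≤ c + ε/2 := by linarith only [hhigh2, e1, hcε]
    constructor
    · linarith
    · linarith
  exact eventually_atTop.mp hev
end
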